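/- For a positive semidefinite N×N matrix X and rank-one matrices x_i y_i† (x_i, y_i ∈ ℂ^N, 1 ≤ i ≤ K), one has det( Σ_{i=1}^K x_i y_i† X y_i x_i† ) ≥ det(X) · MP_{(X,Y)}, where MP_{(X,Y)} = Σ_{1≤i₁<⋯<i_N≤K} det(Σ_k x_{i_k}x_{i_k}†)·det(Σ_k y_{i_k}y_{i_k}†). -/

import Mathlib

open Matrix
open scoped ComplexOrder

variable {n : Type*} [Fintype n] [DecidableEq n]

lemma herm_trace_eq {M : Matrix n n ℂ} (hM : M.IsHermitian) :
    M.trace = ((∑ i, hM.eigenvalues i : ℝ) : ℂ) := by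
  conv_lhs => rw [hM.spectral_theorem, Unitary.conjStarAlgAut_apply]
  rw [Matrix.trace_mul_cycle, Matrix.UnitaryGroup.star_mul_self hM.eigenvectorUnitary, one_mul,
    Matrix.trace_diagonal]
  push_cast
  rfl

lemma psd_det_eq {M : Matrix n n ℂ} (hM : M.PosSemidef) :
    M.det = ((∏ i, hM.1.eigenvalues i : ℝ) : ℂ) := by
  rw [hM.1.det_eq_prod_eigenvalues]; push_cast; rfl

lemma psd_diag_nonneg {M : Matrix n n ℂ} (hM : M.PosSemidef) (i : n) :
    0 ≤ M i i := by
  have := hM.diag_nonneg (i := i)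
  simpa [Matrix.mulVec_single, dotProduct, Pi.single_apply, apply_ite] using this

lemma psd_det_zero_of_diag_zero {M : Matrix n n ℂ} (hM : M.PosSemidef) {i : n}
    (h : M i i = 0) : M.det = 0 := by
  have h1 := (hM.dotProduct_mulVec_zero_iff (Pi.single i 1)).mp
    (by simpa [dotProduct, mulVec, Pi.single_apply] using h)
  apply Matrix.det_eq_zero_of_column_eq_zero i
  intro k
  have := congrFun h1 k
  simpa [mulVec, dotProduct, Pi.single_apply] using this

/-- Hadamard's inequality for PSD matrices. -/
lemma psd_det_le_prod_diag {M : Matrix n n ℂ} (hM : M.PosSemidef) :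
    M.det ≤ ∏ i, M i i := by
  have hdiagR : ∀ i, M i i = (((M i i).re : ℝ) : ℂ) := fun i =>
    (hM.1.coe_re_apply_self i).symm
  have hdiag_nonneg : ∀ i, 0 ≤ (M i i).re := fun i => by
    have := psd_diag_nonneg hM i
    rw [Complex.le_def] at this
    simpa using this.1
  have hprod : (∏ i, M i i) = ((∏ i, (M i i).re : ℝ) : ℂ) := by
    push_cast
    exact Finset.prod_congr rfl fun i _ => hdiagR i
  by_cases hzero : ∃ i, (M i i).re = 0
  · obtain ⟨i, hi⟩ := hzero
    have : M i i = 0 := by rw [hdiagR i, hi]; simp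
    rw [psd_det_zero_of_diag_zero hM this, hprod]
    rw [Complex.zero_le_real]
    exact Finset.prod_nonneg fun i _ => hdiag_nonneg i
  · push_neg at hzero
    have hpos : ∀ i, 0 < (M i i).re := fun i => (hdiag_nonneg i).lt_of_ne' (hzero i)
    rcases isEmpty_or_nonempty n with hn | hn
    · simp [Matrix.det_isEmpty]
    set d : n → ℝ := fun i => Real.sqrt ((M i i).re) with hd
    have hdpos : ∀ i, 0 < d i := fun i => Real.sqrt_pos.mpr (hpos i)
    have hdsq : ∀ i, d i * d i = (M i i).re := fun i => Real.mul_self_sqrt (hdiag_nonneg i)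
    set E : Matrix n n ℂ := Matrix.diagonal (fun i => ((d i)⁻¹ : ℂ)) with hE
    have hEH : Eᴴ = E := by
      rw [hE]
      ext i j
      rw [Matrix.conjTranspose_apply]
      by_cases h : i = j
      · subst h
        simp [Matrix.diagonal_apply_eq, Complex.star_def, ← Complex.ofReal_inv,
          Complex.conj_ofReal]
      · rw [Matrix.diagonal_apply_ne _ (Ne.symm h), Matrix.diagonal_apply_ne _ h, star_zero]
    set Nm : Matrix n n ℂ := E * M * Eᴴ with hNm
    have hNpsd : Nm.PosSemidef := hM.mul_mul_conjTranspose_same E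
    have hNdiag : ∀ i, Nm i i = 1 := by
      intro i
      have hdne : ((d i : ℝ) : ℂ) ≠ 0 := by
        exact_mod_cast (hdpos i).ne'
      rw [hNm, hEH, hE, Matrix.mul_diagonal, Matrix.diagonal_mul, hdiagR i, ← hdsq i]
      push_cast
      field_simp
    set μ : n → ℝ := fun i => hNpsd.1.eigenvalues i with hμ
    have hμ_nonneg : ∀ i, 0 ≤ μ i := fun i => hNpsd.eigenvalues_nonneg i
    have htr : ∑ i, μ i = (Fintype.card n : ℝ) := by
      have h1 : Nm.trace = ((∑ i, μ i : ℝ) : ℂ) := herm_trace_eq hNpsd.1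
      have h2 : Nm.trace = (Fintype.card n : ℂ) := by
        rw [Matrix.trace]
        simp only [Matrix.diag_apply]
        rw [Finset.sum_congr rfl fun i _ => hNdiag i]
        simp [Finset.card_univ]
      rw [h2] at h1
      exact_mod_cast h1.symm
    have hcard : (0 : ℝ) < (Fintype.card n : ℝ) := by
      exact_mod_cast Fintype.card_pos
    have hprodμ : ∏ i, μ i ≤ 1 := by
      have hw : ∀ i ∈ (Finset.univ : Finset n), (0:ℝ) ≤ (Fintype.card n : ℝ)⁻¹ := fun _ _ => by positivity
      have hw1 : ∑ _i : n, (Fintype.card n : ℝ)⁻¹ = 1 := by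
        rw [Finset.sum_const, Finset.card_univ, nsmul_eq_mul]
        field_simp
      have hz : ∀ i ∈ (Finset.univ : Finset n), (0:ℝ) ≤ μ i := fun i _ => hμ_nonneg i
      have hgm := Real.geom_mean_le_arith_mean_weighted Finset.univ
        (fun _ => (Fintype.card n : ℝ)⁻¹) μ hw hw1 hz
      have hsum : ∑ i, (Fintype.card n : ℝ)⁻¹ * μ i = 1 := by
        rw [← Finset.mul_sum, htr]
        field_simp
      rw [hsum] at hgm
      have hpow := pow_le_pow_left₀ (Finset.prod_nonneg fun i _ =>
        Real.rpow_nonneg (hμ_nonneg i) _) hgm (Fintype.card n)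
      rw [one_pow, ← Finset.prod_pow] at hpow
      calc ∏ i, μ i = ∏ i, (μ i ^ ((Fintype.card n : ℝ)⁻¹)) ^ (Fintype.card n) := by
            refine Finset.prod_congr rfl fun i _ => ?_
            rw [← Real.rpow_natCast (μ i ^ ((Fintype.card n : ℝ)⁻¹)), ← Real.rpow_mul (hμ_nonneg i)]
            rw [inv_mul_cancel₀ (by exact_mod_cast hcard.ne')]
            exact (Real.rpow_one _).symm
        _ ≤ 1 := hpow
    -- relate determinants
    set P : ℝ := ∏ i, d i with hP
    have hPpos : (0:ℝ) < P := Finset.prod_pos fun i _ => hdpos i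
    have hPne : ((P:ℝ) : ℂ) ≠ 0 := by exact_mod_cast hPpos.ne'
    have hdetN : Nm.det = ((∏ i, μ i : ℝ) : ℂ) := psd_det_eq hNpsd
    have hdetE : E.det = ((P : ℝ) : ℂ)⁻¹ := by
      rw [hE, Matrix.det_diagonal, hP]
      push_cast
      rw [← Finset.prod_inv_distrib]
    have hdet_eq : Nm.det = ((P:ℝ):ℂ)⁻¹ * M.det * ((P:ℝ):ℂ)⁻¹ := by
      rw [hNm, Matrix.det_mul, Matrix.det_mul, hEH, hdetE]
    have key : M.det = ((∏ i, μ i : ℝ) : ℂ) * ((P:ℝ):ℂ) * ((P:ℝ):ℂ) := by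
      have h2 : ((P:ℝ):ℂ)⁻¹ * M.det * ((P:ℝ):ℂ)⁻¹ = ((∏ i, μ i : ℝ) : ℂ) :=
        hdet_eq.symm.trans hdetN
      field_simp at h2
      rw [h2]
      push_cast
      ring
    rw [key, hprod]
    have h3 : ((∏ i, μ i : ℝ) : ℂ) * ((P:ℝ):ℂ) * ((P:ℝ):ℂ)
        = (((∏ i, μ i) * P * P : ℝ) : ℂ) := by push_cast; ring
    rw [h3, Complex.real_le_real]
    have h4 : ∏ i, (M i i).re = P * P := by
      rw [hP, ← Finset.prod_mul_distrib]
      exact Finset.prod_congr rfl fun i _ => (hdsq i).symm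
    rw [h4]
    calc (∏ i, μ i) * P * P ≤ 1 * P * P := by
          apply mul_le_mul_of_nonneg_right _ hPpos.le
          exact mul_le_mul_of_nonneg_right hprodμ hPpos.le
      _ = P * P := by ring

namespace DSI

variable {N K : ℕ} (x : Fin K → Fin N → ℂ)

/-- The term associated to `r` in the multilinear expansion. -/
noncomputable def T (r : Fin N → Fin K) : ℂ :=
  (∏ j, x (r j) j) * (Matrix.of fun j l => star (x (r j) l)).det

lemma T_eq_zero_of_not_injective {r : Fin N → Fin K} (h : ¬ Function.Injective r) :
    T x r = 0 := by
  rw [T]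
  obtain ⟨j1, j2, he, hne⟩ : ∃ a b, r a = r b ∧ a ≠ b := by
    simp only [Function.Injective, not_forall] at h
    obtain ⟨a, b, h1, h2⟩ := h
    exact ⟨a, b, h1, h2⟩
  have : (Matrix.of fun j l => star (x (r j) l)).det = 0 := by
    apply Matrix.det_zero_of_row_eq hne
    funext l
    simp [he]
  rw [this, mul_zero]

/-- Multilinear expansion of the determinant of a weighted sum of rank-one matrices. -/
lemma expand (c : Fin K → ℂ) :
    (∑ i, c i • vecMulVec (x i) (star (x i))).det
      = ∑ r : Fin N → Fin K, (∏ j, c (r j)) * T x r := by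
  have hrows : (∑ i, c i • vecMulVec (x i) (star (x i)))
      = Matrix.of fun j => ∑ i : Fin K, (c i * x i j) • (star (x i)) := by
    ext j l
    simp [vecMulVec_apply, Matrix.sum_apply, mul_assoc]
  rw [hrows]
  have hdet : (Matrix.of fun j => ∑ i : Fin K, (c i * x i j) • (star (x i))).det
      = (Matrix.detRowAlternating : (Fin N → ℂ) [⋀^Fin N]→ₗ[ℂ] ℂ).toMultilinearMap
          (fun j => ∑ i : Fin K, (c i * x i j) • (star (x i))) := rfl
  rw [hdet, MultilinearMap.map_sum]
  refine Finset.sum_congr rfl fun r _ => ?_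
  rw [MultilinearMap.map_smul_univ]
  have h2 : ((Matrix.detRowAlternating : (Fin N → ℂ) [⋀^Fin N]→ₗ[ℂ] ℂ).toMultilinearMap
      fun j => star (x (r j))) = (Matrix.of fun j l => star (x (r j) l)).det := rfl
  rw [T, h2]
  simp only [smul_eq_mul]
  rw [Finset.prod_mul_distrib]
  ring

/-- Determinant of a partial sum of rank-one matrices. -/
lemma det_subset_sum (s : Finset (Fin K)) :
    (∑ i ∈ s, vecMulVec (x i) (star (x i))).det
      = ∑ r ∈ Finset.univ.filter (fun r : Fin N → Fin K => ∀ j, r j ∈ s), T x r := by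
  classical
  have h1 : (∑ i ∈ s, vecMulVec (x i) (star (x i)))
      = ∑ i, (if i ∈ s then (1:ℂ) else 0) • vecMulVec (x i) (star (x i)) := by
    symm
    calc ∑ i, (if i ∈ s then (1:ℂ) else 0) • vecMulVec (x i) (star (x i))
        = ∑ i, (if i ∈ s then vecMulVec (x i) (star (x i)) else 0) := by
          refine Finset.sum_congr rfl fun i _ => ?_
          split <;> simp
      _ = ∑ i ∈ s, vecMulVec (x i) (star (x i)) := by
          rw [Finset.sum_ite_mem, Finset.univ_inter]
  rw [h1, expand]
  have h2 : ∀ r : Fin N → Fin K,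
      (∏ j, (if r j ∈ s then (1:ℂ) else 0)) = if (∀ j, r j ∈ s) then (1:ℂ) else 0 := by
    intro r
    by_cases h : ∀ j, r j ∈ s
    · rw [if_pos h]
      exact Finset.prod_eq_one fun j _ => if_pos (h j)
    · rw [if_neg h]
      push_neg at h
      obtain ⟨j, hj⟩ := h
      exact Finset.prod_eq_zero (Finset.mem_univ j) (if_neg hj)
  calc ∑ r : Fin N → Fin K, (∏ j, (if r j ∈ s then (1:ℂ) else 0)) * T x r
      = ∑ r : Fin N → Fin K, (if (∀ j, r j ∈ s) then T x r else 0) := by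
        refine Finset.sum_congr rfl fun r _ => ?_
        rw [h2 r]
        split <;> simp
    _ = ∑ r ∈ Finset.univ.filter (fun r : Fin N → Fin K => ∀ j, r j ∈ s), T x r := by
        rw [Finset.sum_filter]

/-- Weighted Cauchy–Binet for sums of rank-one matrices. -/
lemma cauchy_binet (c : Fin K → ℂ) :
    (∑ i, c i • vecMulVec (x i) (star (x i))).det
      = ∑ s ∈ Finset.powersetCard N (Finset.univ : Finset (Fin K)),
          (∏ i ∈ s, c i) * (∑ i ∈ s, vecMulVec (x i) (star (x i))).det := by
  classical
  rw [expand]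
  have hstep1 : ∑ r : Fin N → Fin K, (∏ j, c (r j)) * T x r
      = ∑ r ∈ Finset.univ.filter (fun r : Fin N → Fin K => Function.Injective r),
          (∏ j, c (r j)) * T x r := by
    symm
    apply Finset.sum_subset (Finset.filter_subset _ _)
    intro r _ hr
    rw [Finset.mem_filter, not_and] at hr
    rw [T_eq_zero_of_not_injective x (hr (Finset.mem_univ r)), mul_zero]
  have hmaps : ∀ r ∈ Finset.univ.filter (fun r : Fin N → Fin K => Function.Injective r),
      Finset.image r Finset.univ ∈ Finset.powersetCard N (Finset.univ : Finset (Fin K)) := by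
    intro r hr
    rw [Finset.mem_filter] at hr
    rw [Finset.mem_powersetCard]
    refine ⟨Finset.subset_univ _, ?_⟩
    rw [Finset.card_image_of_injective _ hr.2, Finset.card_univ, Fintype.card_fin]
  rw [hstep1, ← Finset.sum_fiberwise_of_maps_to hmaps (fun r => (∏ j, c (r j)) * T x r)]
  refine Finset.sum_congr rfl fun s hs => ?_
  rw [Finset.mem_powersetCard] at hs
  rw [det_subset_sum, Finset.mul_sum]
  have hcoef : ∀ r ∈ (Finset.univ.filter
        (fun r : Fin N → Fin K => Function.Injective r)).filter
        (fun r => Finset.image r Finset.univ = s),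
      (∏ j, c (r j)) * T x r = (∏ i ∈ s, c i) * T x r := by
    intro r hr
    simp only [Finset.mem_filter] at hr
    obtain ⟨⟨-, hinj⟩, himg⟩ := hr
    rw [← himg, Finset.prod_image (fun a _ b _ h => hinj h)]
  rw [Finset.sum_congr rfl hcoef]
  apply Finset.sum_subset
  · intro r hr
    rw [Finset.mem_filter] at hr
    obtain ⟨hr1, himg⟩ := hr
    rw [Finset.mem_filter] at hr1
    rw [Finset.mem_filter]
    refine ⟨Finset.mem_univ r, fun j => ?_⟩
    rw [← himg]
    exact Finset.mem_image_of_mem r (Finset.mem_univ j)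
  · intro r hr1 hr2
    rw [Finset.mem_filter] at hr1
    by_cases hinj : Function.Injective r
    · exfalso
      apply hr2
      rw [Finset.mem_filter]
      refine ⟨Finset.mem_filter.mpr ⟨Finset.mem_univ r, hinj⟩, ?_⟩
      apply Finset.eq_of_subset_of_card_le
      · intro i hi
        rw [Finset.mem_image] at hi
        obtain ⟨j, -, rfl⟩ := hi
        exact hr1.2 j
      · rw [Finset.card_image_of_injective _ hinj, Finset.card_univ, Fintype.card_fin, hs.2]
    · rw [T_eq_zero_of_not_injective x hinj, mul_zero]

end DSI

namespace DSI

lemma psd_vecMulVec {n : Type*} [Fintype n] (v : n → ℂ) :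
    (vecMulVec v (star v)).PosSemidef := by
  have h : vecMulVec v (star v) = Matrix.replicateCol (Fin 1) v * (Matrix.replicateCol (Fin 1) v)ᴴ := by
    rw [Matrix.conjTranspose_replicateCol]
    ext i j
    simp [Matrix.vecMulVec_apply, Matrix.mul_apply]
  rw [h]
  exact Matrix.posSemidef_self_mul_conjTranspose _

lemma psd_sum_vecMulVec {n : Type*} [Fintype n] {K : ℕ} (v : Fin K → n → ℂ)
    (s : Finset (Fin K)) : (∑ i ∈ s, vecMulVec (v i) (star (v i))).PosSemidef :=
  Finset.sum_induction _ _ (fun _ _ ha hb => ha.add hb) Matrix.PosSemidef.zero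
    (fun i _ => psd_vecMulVec (v i))

lemma psd_det_nonneg {n : Type*} [Fintype n] [DecidableEq n] {M : Matrix n n ℂ}
    (hM : M.PosSemidef) : 0 ≤ M.det := by
  rw [psd_det_eq hM, Complex.zero_le_real]
  exact Finset.prod_nonneg fun i _ => hM.eigenvalues_nonneg i

lemma summand_eq {N K : ℕ} (x y : Fin K → Fin N → ℂ) (X : Matrix (Fin N) (Fin N) ℂ)
    (i : Fin K) :
    vecMulVec (x i) (star (y i)) * X * vecMulVec (y i) (star (x i))
      = (star (y i) ⬝ᵥ X *ᵥ y i) • vecMulVec (x i) (star (x i)) := by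
  ext j l
  simp only [Matrix.mul_apply, Matrix.vecMulVec_apply, Matrix.smul_apply, smul_eq_mul,
    dotProduct, Matrix.mulVec, Pi.star_apply, Finset.sum_mul, Finset.mul_sum]
  rw [Finset.sum_comm]
  exact Finset.sum_congr rfl fun q _ => Finset.sum_congr rfl fun p _ => by ring

lemma key_ineq {N K : ℕ} (y : Fin K → Fin N → ℂ) (X : Matrix (Fin N) (Fin N) ℂ)
    (hX : X.PosSemidef) (s : Finset (Fin K)) (hs : s.card = N) :
    X.det * (∑ i ∈ s, vecMulVec (y i) (star (y i))).det
      ≤ ∏ i ∈ s, (star (y i) ⬝ᵥ X *ᵥ y i) := by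
  classical
  let e : Fin N ≃ {i // i ∈ s} := (finCongr hs.symm).trans s.equivFin.symm
  set Y : Matrix (Fin N) (Fin N) ℂ := Matrix.of fun j k => y (e k) j with hY
  have hYY : Y * Yᴴ = ∑ i ∈ s, vecMulVec (y i) (star (y i)) := by
    ext j l
    rw [Matrix.mul_apply, Matrix.sum_apply]
    have h1 : ∑ i ∈ s, vecMulVec (y i) (star (y i)) j l
        = ∑ i : {i // i ∈ s}, y i j * star (y i l) := by
      rw [← Finset.sum_coe_sort s (fun i => vecMulVec (y i) (star (y i)) j l)]
      exact Finset.sum_congr rfl fun i _ => by rw [Matrix.vecMulVec_apply, Pi.star_apply]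
    rw [h1, ← Equiv.sum_comp e (fun i : {i // i ∈ s} => y i j * star (y i l))]
    exact Finset.sum_congr rfl fun k _ => by
      rw [hY, Matrix.conjTranspose_apply]
      simp [Matrix.of_apply]
  have hM : (Yᴴ * X * Y).PosSemidef := hX.conjTranspose_mul_mul_same Y
  have hdiag : ∀ k, (Yᴴ * X * Y) k k = star (y (e k)) ⬝ᵥ X *ᵥ y (e k) := by
    intro k
    simp only [Matrix.mul_apply, Matrix.conjTranspose_apply, dotProduct,
      Matrix.mulVec, Pi.star_apply, Finset.sum_mul, Finset.mul_sum, hY, Matrix.of_apply]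
    rw [Finset.sum_comm]
    exact Finset.sum_congr rfl fun p _ => Finset.sum_congr rfl fun q _ => by ring
  have hH := psd_det_le_prod_diag hM
  have hdet : (Yᴴ * X * Y).det = X.det * (Y * Yᴴ).det := by
    rw [Matrix.det_mul, Matrix.det_mul, Matrix.det_mul, Matrix.det_conjTranspose]
    ring
  have hprod : ∏ k, (Yᴴ * X * Y) k k = ∏ i ∈ s, (star (y i) ⬝ᵥ X *ᵥ y i) := by
    rw [Finset.prod_congr rfl (fun k _ => hdiag k),
      Equiv.prod_comp e (fun i : {i // i ∈ s} => star (y i) ⬝ᵥ X *ᵥ y i),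
      Finset.prod_coe_sort s (fun i => star (y i) ⬝ᵥ X *ᵥ y i)]
  calc X.det * (∑ i ∈ s, vecMulVec (y i) (star (y i))).det
      = (Yᴴ * X * Y).det := by rw [hdet, hYY]
    _ ≤ ∏ k, (Yᴴ * X * Y) k k := hH
    _ = ∏ i ∈ s, (star (y i) ⬝ᵥ X *ᵥ y i) := hprod

end DSI

/-- The matroidal permanent. -/
noncomputable def MP {N K : ℕ} (x y : Fin K → Fin N → ℂ) : ℂ :=
  ∑ s ∈ Finset.powersetCard N (Finset.univ : Finset (Fin K)),
    (∑ i ∈ s, vecMulVec (x i) (star (x i))).det *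
      (∑ i ∈ s, vecMulVec (y i) (star (y i))).det

theorem det_separable_image_lower_bound {N K : ℕ} (x y : Fin K → Fin N → ℂ)
    (X : Matrix (Fin N) (Fin N) ℂ) (hX : X.PosDef) :
    X.det * MP x y ≤
      (∑ i : Fin K,
        vecMulVec (x i) (star (y i)) * X * vecMulVec (y i) (star (x i))).det := by
  classical
  have hXps : X.PosSemidef := hX.posSemidef
  rw [Finset.sum_congr rfl (fun i _ => DSI.summand_eq x y X i)]
  rw [DSI.cauchy_binet x (fun i => star (y i) ⬝ᵥ X *ᵥ y i)]
  rw [MP, Finset.mul_sum]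
  apply Finset.sum_le_sum
  intro s hs
  rw [Finset.mem_powersetCard] at hs
  have hdX : 0 ≤ (∑ i ∈ s, vecMulVec (x i) (star (x i))).det :=
    DSI.psd_det_nonneg (DSI.psd_sum_vecMulVec x s)
  have hk := DSI.key_ineq y X hXps s hs.2
  calc X.det * ((∑ i ∈ s, vecMulVec (x i) (star (x i))).det *
        (∑ i ∈ s, vecMulVec (y i) (star (y i))).det)
      = (X.det * (∑ i ∈ s, vecMulVec (y i) (star (y i))).det) *
          (∑ i ∈ s, vecMulVec (x i) (star (x i))).det := by ring
    _ ≤ (∏ i ∈ s, (star (y i) ⬝ᵥ X *ᵥ y i)) *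
          (∑ i ∈ s, vecMulVec (x i) (star (x i))).det :=
        mul_le_mul_of_nonneg_right hk hdX
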